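/- Let m be a positive integer and let φ be a supermodular set function on subsets of {1,…,m}, i.e., φ(S ∪ T) + φ(S ∩ T) ≥ φ(S) + φ(T) for all S, T ⊆ {1,…,m}. Let T ⊆ {1,…,m} and g ∈ ℝ. Then g ≥ φ(T) if and only if for every S ⊆ {1,…,m}, g ≥ φ(S) − Σ_{k ∈ S \ T} [ φ({1,…,m}) − φ({1,…,m} \ {k}) ] + Σ_{k ∈ T \ S} [ φ(S ∪ {k}) − φ(S) ]. (In terms of the characteristic vector x̃ of T, this says g ≥ φ(S(x̃)) holds exactly when the family of linear inequalities g ≥ φ(S) − Σ_{k∈S} ρ([m]\{k},k)(1 − x̃_k) + Σ_{k∉S} ρ(S,k) x̃_k holds for all S.) -/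

import Mathlib

section Aux

variable {m : ℕ} (φ : Finset (Fin m) → ℝ)

lemma marg_mono (hsuper : ∀ S T : Finset (Fin m), φ S + φ T ≤ φ (S ∪ T) + φ (S ∩ T)) {A B : Finset (Fin m)} {k : Fin m} (hAB : A ⊆ B) (hk : k ∉ B) :
    φ (insert k A) - φ A ≤ φ (insert k B) - φ B := by
  have h := hsuper (insert k A) B
  have hU : insert k A ∪ B = insert k B := by
    rw [Finset.insert_union, Finset.union_eq_right.mpr hAB]
  have hI : insert k A ∩ B = A := by
    rw [Finset.insert_inter_of_notMem hk, Finset.inter_eq_left.mpr hAB]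
  rw [hU, hI] at h
  linarith

lemma lower_bound (hsuper : ∀ S T : Finset (Fin m), φ S + φ T ≤ φ (S ∪ T) + φ (S ∩ T)) {S : Finset (Fin m)} (D : Finset (Fin m)) (hD : Disjoint D S) :
    φ S + ∑ k ∈ D, (φ (insert k S) - φ S) ≤ φ (S ∪ D) := by
  induction D using Finset.induction with
  | empty => simp
  | @insert a D ha ih =>
    have hdisj := hD
    rw [Finset.disjoint_insert_left] at hdisj
    obtain ⟨haS, hDS⟩ := hdisj
    have ih' := ih hDS
    have haSD : a ∉ S ∪ D := by simp [haS, ha]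
    have hmono := marg_mono φ hsuper (Finset.subset_union_left (s₁ := S) (s₂ := D)) haSD
    rw [Finset.sum_insert ha]
    have : S ∪ insert a D = insert a (S ∪ D) := by
      rw [Finset.union_insert]
    rw [this]
    linarith

lemma upper_bound (hsuper : ∀ S T : Finset (Fin m), φ S + φ T ≤ φ (S ∪ T) + φ (S ∩ T)) {T : Finset (Fin m)} (D : Finset (Fin m)) (hD : Disjoint D T) :
    φ (T ∪ D) ≤ φ T + ∑ k ∈ D, (φ Finset.univ - φ (Finset.univ.erase k)) := by
  induction D using Finset.induction with
  | empty => simp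
  | @insert a D ha ih =>
    rw [Finset.disjoint_insert_left] at hD
    obtain ⟨haT, hDT⟩ := hD
    have ih' := ih hDT
    have haTD : a ∉ T ∪ D := by simp [haT, ha]
    have hsub : T ∪ D ⊆ Finset.univ.erase a := fun x hx =>
      Finset.mem_erase.mpr ⟨fun h => haTD (h ▸ hx), Finset.mem_univ x⟩
    have hane : a ∉ Finset.univ.erase a := Finset.notMem_erase a _
    have hmono := marg_mono φ hsuper hsub hane
    rw [Finset.insert_erase (Finset.mem_univ a)] at hmono
    rw [Finset.sum_insert ha]
    have : T ∪ insert a D = insert a (T ∪ D) := by rw [Finset.union_insert]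
    rw [this]
    linarith

end Aux

/-- for a supermodular set function `φ` on subsets of `{1,…,m}` with marginal
values `ρ(S,k) = φ(S ∪ {k}) − φ(S)`, and any subset `T` and real `g`:
`g ≥ φ(T)` iff for every subset `S`,
`g ≥ φ(S) − Σ_{k ∈ S\T} ρ([m]\{k}, k) + Σ_{k ∈ T\S} ρ(S, k)`. -/
theorem supermodular_cut_iff (m : ℕ) (hm : 1 ≤ m) (φ : Finset (Fin m) → ℝ)
    (hsuper : ∀ S T : Finset (Fin m), φ S + φ T ≤ φ (S ∪ T) + φ (S ∩ T))
    (T : Finset (Fin m)) (g : ℝ) :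
    g ≥ φ T ↔
      ∀ S : Finset (Fin m),
        g ≥ φ S - (∑ k ∈ S \ T, (φ Finset.univ - φ (Finset.univ.erase k))) +
            (∑ k ∈ T \ S, (φ (insert k S) - φ S)) := by
  constructor
  · intro hg S
    have h1 : φ S + ∑ k ∈ T \ S, (φ (insert k S) - φ S) ≤ φ (S ∪ (T \ S)) :=
      lower_bound φ hsuper (T \ S) Finset.sdiff_disjoint
    rw [Finset.union_sdiff_self_eq_union] at h1
    have h2 : φ (T ∪ (S \ T)) ≤ φ T + ∑ k ∈ S \ T, (φ Finset.univ - φ (Finset.univ.erase k)) :=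
      upper_bound φ hsuper _ Finset.sdiff_disjoint
    rw [Finset.union_sdiff_self_eq_union, Finset.union_comm] at h2
    linarith
  · intro h
    have := h T
    simpa using this
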